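/- (Rigidity for the Poincaré constant.) Let π be a probability measure on X×Y with a.e.-positive density with respect to Lebesgue measure. If f ∈ L²(π^Y) satisfies f(y) = (Q_π f)(x) for π-a.e. (x,y) — equivalently ‖Q_π f‖_{L²(π)} = ‖f‖_{L²(π^Y)} with f = Q_π f π-a.e. — then f is π^Y-a.e. equal to a constant; in particular if additionally ∫_Y f dπ^Y = 0, then f = 0 π^Y-a.e. -/

import Mathlib

open MeasureTheory

noncomputable section

/-- Euclidean space `ℝ^d`, carrying Lebesgue measure. -/
abbrev E (d : ℕ) : Type := Fin d → ℝ

/-- The sub-σ-algebra of `E d × E d` generated by the first coordinate `X`. -/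
def mX (d : ℕ) : MeasurableSpace (E d × E d) := MeasurableSpace.comap Prod.fst inferInstance

/-- The sub-σ-algebra of `E d × E d` generated by the second coordinate `Y`. -/
def mY (d : ℕ) : MeasurableSpace (E d × E d) := MeasurableSpace.comap Prod.snd inferInstance

/-- Conditional expectation operator `(Q_π f) = E_π[f | X]`. -/
noncomputable def Qc {d : ℕ} (π : Measure (E d × E d)) (f : E d × E d → ℝ) : E d × E d → ℝ :=
  π[f | mX d]

/-- Conditional expectation operator `(P_π f) = E_π[f | Y]`. -/
noncomputable def Pc {d : ℕ} (π : Measure (E d × E d)) (f : E d × E d → ℝ) : E d × E d → ℝ :=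
  π[f | mY d]

/-- `T_π := P_π Q_π`, acting on functions of `y` (embedded canonically in `L²(π)`
via `(x, y) ↦ g y`); its value is a `σ(Y)`-measurable function on `E d × E d`,
identified with an element of `L²(π^Y)`. -/
noncomputable def Tc {d : ℕ} (π : Measure (E d × E d)) (g : E d → ℝ) : E d × E d → ℝ :=
  Pc π (Qc π (fun z => g z.2))

/-- A `σ(X)`-measurable function on the product is constant on fibers of `fst`. -/
lemma factor_through_fst {d : ℕ} {G : E d × E d → ℝ}
    (hG : Measurable[mX d] G) (z : E d × E d) (y₀ : E d) :
    G z = G (z.1, y₀) := by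
  have hsing : MeasurableSet ({G z} : Set ℝ) := measurableSet_singleton _
  have := hG hsing
  rw [mX, MeasurableSpace.comap] at this
  obtain ⟨S, -, hS⟩ := this
  have hz : z ∈ Prod.fst ⁻¹' S := by rw [hS]; exact rfl
  have hz' : (z.1, y₀) ∈ Prod.fst ⁻¹' S := hz
  rw [hS] at hz'
  exact (hz' : G (z.1, y₀) = G z).symm

/-- Rigidity: if `π` has an a.e.-positive density with respect to Lebesgue
measure and `f ∈ L²(π^Y)` satisfies `f(y) = (Q_π f)(x)` for `π`-a.e. `(x,y)`, then `f` is
`π^Y`-a.e. constant; in particular, if moreover `∫ f dπ^Y = 0` then `f = 0` `π^Y`-a.e. -/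
theorem sinkhorn_poincare_rigidity
    {d : ℕ} (π : Measure (E d × E d)) [IsProbabilityMeasure π]
    (ρ : E d × E d → ℝ) (hρmeas : Measurable ρ)
    (hρpos : ∀ᵐ z ∂(volume : Measure (E d × E d)), 0 < ρ z)
    (hπ : π = volume.withDensity fun z => ENNReal.ofReal (ρ z))
    (f : E d → ℝ) (hf : MemLp f 2 (π.map Prod.snd))
    (hfix : ∀ᵐ z ∂π, f z.2 = Qc π (fun w => f w.2) z) :
    (∃ c : ℝ, ∀ᵐ y ∂(π.map Prod.snd), f y = c) ∧
    ((∫ y, f y ∂(π.map Prod.snd)) = 0 → ∀ᵐ y ∂(π.map Prod.snd), f y = 0) := by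
  -- G = conditional expectation, measurable w.r.t. σ(X)
  set G : E d × E d → ℝ := Qc π (fun w => f w.2) with hGdef
  have hGsm : StronglyMeasurable[mX d] G := stronglyMeasurable_condExp
  have hGm : Measurable[mX d] G := hGsm.measurable
  set y₀ : E d := fun _ => 0
  set g : E d → ℝ := fun x => G (x, y₀) with hg
  have hfac : ∀ z : E d × E d, G z = g z.1 := fun z => factor_through_fst hGm z y₀
  -- f(y) = g(x) for π-a.e. z, hence for volume-a.e. z
  have hπfix : ∀ᵐ z ∂π, f z.2 = g z.1 := by
    filter_upwards [hfix] with z hz using hz.trans (hfac z)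
  have hvolπ : (volume : Measure (E d × E d)) ≪ π := by
    rw [hπ]
    exact withDensity_absolutelyContinuous'
      (hρmeas.ennreal_ofReal.aemeasurable)
      (by filter_upwards [hρpos] with z hz; simp [ENNReal.ofReal_eq_zero, not_le, hz])
  have hvolfix : ∀ᵐ z ∂(volume : Measure (E d × E d)), f z.2 = g z.1 := hvolπ.ae_le hπfix
  rw [Measure.volume_eq_prod] at hvolfix
  have hfib : ∀ᵐ x ∂(volume : Measure (E d)), ∀ᵐ y ∂(volume : Measure (E d)), f y = g x :=
    Measure.ae_ae_of_ae_prod hvolfix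
  -- pick x₀
  obtain ⟨x₀, hx₀⟩ := hfib.exists
  -- so f = c volume-a.e., with c = g x₀
  set c := g x₀ with hc
  -- π^Y ≪ volume
  have hmapac : π.map Prod.snd ≪ (volume : Measure (E d)) := by
    refine Measure.AbsolutelyContinuous.mk fun s hs hvs => ?_
    rw [Measure.map_apply measurable_snd hs]
    have hπac : π ≪ (volume : Measure (E d × E d)) := by
      rw [hπ]; exact withDensity_absolutelyContinuous _ _
    refine hπac ?_
    have : Prod.snd ⁻¹' s = (Set.univ : Set (E d)) ×ˢ s := by ext z; simp
    rw [Measure.volume_eq_prod, this, Measure.prod_prod, hvs, mul_zero]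
  have hconst : ∀ᵐ y ∂(π.map Prod.snd), f y = c := hmapac.ae_le hx₀
  refine ⟨⟨c, hconst⟩, fun hint => ?_⟩
  -- second part
  have : IsProbabilityMeasure (π.map Prod.snd) :=
    Measure.isProbabilityMeasure_map measurable_snd.aemeasurable
  have hfi : Integrable f (π.map Prod.snd) :=
    hf.integrable (by norm_num)
  have hic : ∫ y, f y ∂(π.map Prod.snd) = c := by
    rw [integral_congr_ae hconst]
    simp
  have hc0 : c = 0 := by rw [← hic, hint]
  filter_upwards [hconst] with y hy using hy.trans hc0
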